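/- The Hausdorff distance between Σ⁰ := ([0,1]×{0}) ∪ ([1/4,1]×{1}) and Σ^η := [0,1]×{0,1}, as subsets of ℝ² with Euclidean norm, equals 1/4. -/

import Mathlib

open Metric Set

private lemma dist19 (a b c d : ℝ) :
    dist ((WithLp.equiv 2 (ℝ × ℝ)).symm (a, b)) ((WithLp.equiv 2 (ℝ × ℝ)).symm (c, d))
      = Real.sqrt (dist a c ^ 2 + dist b d ^ 2) :=
  WithLp.prod_dist_eq_of_L2 _ _

theorem stmt19 :
    Metric.hausdorffDist
        ((WithLp.equiv 2 (ℝ × ℝ)).symm ''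
          ((Set.Icc (0 : ℝ) 1 ×ˢ {(0 : ℝ)}) ∪ (Set.Icc (1 / 4 : ℝ) 1 ×ˢ {(1 : ℝ)})))
        ((WithLp.equiv 2 (ℝ × ℝ)).symm ''
          (Set.Icc (0 : ℝ) 1 ×ˢ ({0, 1} : Set ℝ)))
      = 1 / 4 := by
  set e := (WithLp.equiv 2 (ℝ × ℝ)).symm
  set S := e '' ((Set.Icc (0 : ℝ) 1 ×ˢ {(0 : ℝ)}) ∪ (Set.Icc (1 / 4 : ℝ) 1 ×ˢ {(1 : ℝ)}))
  set T := e '' (Set.Icc (0 : ℝ) 1 ×ˢ ({0, 1} : Set ℝ))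
  have hST : S ⊆ T := by
    apply Set.image_mono
    rintro ⟨a, b⟩ (⟨ha, hb⟩ | ⟨ha, hb⟩)
    · exact ⟨ha, Or.inl hb⟩
    · exact ⟨⟨le_trans (by norm_num) ha.1, ha.2⟩, Or.inr hb⟩
  have hSne : S.Nonempty := ⟨e (0, 0), ⟨(0, 0), Or.inl ⟨⟨le_refl 0, by norm_num⟩, rfl⟩, rfl⟩⟩
  have hTne : T.Nonempty := hSne.mono hST
  have hcont : Continuous e := WithLp.prod_continuous_toLp 2 ℝ ℝ
  have hTb : Bornology.IsBounded T := by
    have : IsCompact T := by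
      apply IsCompact.image _ hcont
      exact (isCompact_Icc).prod ((isCompact_singleton).union isCompact_singleton)
    exact this.isBounded
  have hSb : Bornology.IsBounded S := hTb.subset hST
  have hfin : EMetric.hausdorffEdist S T ≠ ⊤ :=
    Metric.hausdorffEdist_ne_top_of_nonempty_of_bounded hSne hTne hSb hTb
  apply le_antisymm
  · apply Metric.hausdorffDist_le_of_infDist (by norm_num)
    · intro x hx
      rw [infDist_zero_of_mem (hST hx)]; norm_num
    · rintro x ⟨⟨a, b⟩, ⟨ha, hb⟩, rfl⟩
      rcases hb with rfl | rfl
      · have hm : e (a, (0:ℝ)) ∈ S := ⟨(a, 0), Or.inl ⟨ha, rfl⟩, rfl⟩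
        rw [infDist_zero_of_mem hm]; norm_num
      · have hmem : e (max a (1/4), (1:ℝ)) ∈ S :=
          ⟨(max a (1/4), 1), Or.inr ⟨⟨le_max_right _ _, max_le ha.2 (by norm_num)⟩, rfl⟩, rfl⟩
        calc infDist (e (a, (1:ℝ))) S ≤ dist (e (a, (1:ℝ))) (e (max a (1/4), (1:ℝ))) :=
              infDist_le_dist_of_mem hmem
          _ ≤ 1 / 4 := by
              rw [dist19, dist_self]
              have h1 : dist a (max a (1/4)) ≤ 1/4 := by
                rcases le_total a (1/4) with h | h
                · rw [max_eq_right h, Real.dist_eq, abs_le]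
                  exact ⟨by linarith [ha.1], by linarith⟩
                · rw [max_eq_left h, dist_self]; norm_num
              calc Real.sqrt (dist a (max a (1/4)) ^ 2 + (0:ℝ) ^ 2)
                  ≤ Real.sqrt ((1/4:ℝ)^2) := Real.sqrt_le_sqrt (by
                    nlinarith [dist_nonneg (x := a) (y := max a (1/4))])
                _ = 1/4 := by rw [Real.sqrt_sq (by norm_num)]
  · have hmem : e ((0:ℝ), (1:ℝ)) ∈ T := ⟨(0, 1), ⟨⟨le_refl 0, by norm_num⟩, Or.inr rfl⟩, rfl⟩
    have hkey : ∀ y ∈ S, (1/4:ℝ) ≤ dist (e ((0:ℝ), (1:ℝ))) y := by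
      rintro y ⟨⟨a, b⟩, hab, rfl⟩
      rcases hab with ⟨ha, rfl⟩ | ⟨ha, rfl⟩
      · rw [dist19]
        have : (1:ℝ) ≤ Real.sqrt (dist (0:ℝ) a ^ 2 + dist (1:ℝ) 0 ^ 2) := by
          rw [show dist (1:ℝ) 0 = 1 by simp [Real.dist_eq]]
          exact Real.le_sqrt' (by norm_num) |>.2 (by nlinarith [sq_nonneg (dist (0:ℝ) a)])
        linarith
      · rw [dist19, dist_self]
        have hda : (1/4:ℝ) ≤ dist (0:ℝ) a := by
          rw [Real.dist_eq, zero_sub, abs_neg, abs_of_nonneg (by linarith [ha.1])]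
          exact ha.1
        exact Real.le_sqrt' (by norm_num) |>.2 (by nlinarith)
    have h1 : (1/4 : ℝ) ≤ infDist (e ((0:ℝ), (1:ℝ))) S := by
      by_contra h
      push_neg at h
      obtain ⟨y, hy, hlt⟩ := (infDist_lt_iff hSne).1 h
      exact absurd (hkey y hy) (not_le.2 hlt)
    calc (1/4 : ℝ) ≤ infDist (e ((0:ℝ), (1:ℝ))) S := h1
      _ ≤ hausdorffDist T S :=
          infDist_le_hausdorffDist_of_mem hmem (by rwa [EMetric.hausdorffEdist_comm])
      _ = hausdorffDist S T := hausdorffDist_comm
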